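/- arXiv:1409.8088 — 2 statements merged into one kernel-verified Lean document; each statement's English description precedes it below -/
import Mathlib

section
/- For every y>0 and every measurable function F:ℝ→ℂ, one has the identity (as an equality in [0,∞]): ∫_ℝ |ξ|^{-1/2}·|F(yξ+|ξ|^{1/2})|² dξ = ∫_ℝ |F(ζ)|²·(1/4 + y|ζ|)^{-1/2} dζ + 2·∫_0^{1/(4y)} |F(ζ)|²·(1/4 − yζ)^{-1/2} dζ. -/
open MeasureTheory Real
open scoped ENNReal NNReal

open Set


lemma my_lintegral_image {s : Set ℝ} {f f' : ℝ → ℝ} (hs : MeasurableSet s)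
    (hf' : ∀ x ∈ s, HasDerivWithinAt f (f' x) s x) (hf : Set.InjOn f s) (g : ℝ → ℝ≥0∞) :
    ∫⁻ x in f '' s, g x = ∫⁻ x in s, ENNReal.ofReal |f' x| * g (f x) := by
  simpa only [ContinuousLinearMap.det_toSpanSingleton] using
    lintegral_image_eq_lintegral_abs_det_fderiv_mul volume hs
      (fun x hx => (hf' x hx).hasFDerivWithinAt) hf g

lemma my_split_line (h : ℝ → ℝ≥0∞) (a : ℝ) :
    ∫⁻ x, h x = (∫⁻ x in Set.Iio a, h x) + ∫⁻ x in Set.Ioi a, h x := by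
  rw [← lintegral_add_compl h (measurableSet_Iio (a := a)), Set.compl_Iio]
  congr 1
  exact (setLIntegral_congr (Ioi_ae_eq_Ici (a := a))).symm

lemma my_split_Iio (h : ℝ → ℝ≥0∞) {a b : ℝ} (hab : a ≤ b) :
    ∫⁻ x in Set.Iio b, h x = (∫⁻ x in Set.Iio a, h x) + ∫⁻ x in Set.Ioo a b, h x := by
  have hdisj : Disjoint (Set.Iio a) (Set.Ico a b) :=
    Set.disjoint_left.2 fun x hx hx' => (not_lt.2 hx'.1) hx
  rw [← Set.Iio_union_Ico_eq_Iio hab, lintegral_union measurableSet_Ico hdisj]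
  congr 1
  exact (setLIntegral_congr (Ioo_ae_eq_Ico (a := a) (b := b))).symm


section aux
variable {y : ℝ} (hy : 0 < y)

-- images
lemma img_pos (hy : 0 < y) :
    (fun ξ : ℝ => y * ξ + Real.sqrt |ξ|) '' Set.Ioi 0 = Set.Ioi (0:ℝ) := by
  apply Set.Subset.antisymm
  · rintro ζ ⟨ξ, hξ, rfl⟩
    have hξ' : (0:ℝ) < ξ := hξ
    have : 0 ≤ Real.sqrt |ξ| := Real.sqrt_nonneg _
    have : 0 < y * ξ := mul_pos hy hξ'
    simp only [Set.mem_Ioi]; linarith [Real.sqrt_nonneg |ξ|]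
  · intro ζ hζ
    have hζ' : (0:ℝ) < ζ := hζ
    set r := Real.sqrt (1 + 4*y*ζ) with hr
    have hr2 : r^2 = 1 + 4*y*ζ := Real.sq_sqrt (by nlinarith)
    have hr0 : 0 ≤ r := Real.sqrt_nonneg _
    have hr1 : 1 < r := by nlinarith [mul_pos hy hζ']
    set u := (r - 1)/(2*y) with hu
    have hu0 : 0 < u := div_pos (by linarith) (by linarith)
    refine ⟨u^2, Set.mem_Ioi.2 (pow_pos hu0 2), ?_⟩
    show y * u^2 + Real.sqrt |u^2| = ζ
    have habs : |u^2| = u^2 := abs_of_nonneg (sq_nonneg u)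
    have hsq : Real.sqrt (u^2) = u := Real.sqrt_sq hu0.le
    have h1 : 2*y*u = r - 1 := by rw [hu]; field_simp
    have h4 : (4*y)*(y*u^2 + u) = (4*y)*ζ := by nlinarith
    have := mul_left_cancel₀ (by positivity : (4*y) ≠ 0) h4
    rw [habs, hsq]; linarith

lemma img_mid (hy : 0 < y) :
    (fun ξ : ℝ => y * ξ + Real.sqrt |ξ|) '' Set.Ioo (-(1/(4*y^2))) 0
      = Set.Ioo (0:ℝ) (1/(4*y)) := by
  apply Set.Subset.antisymm
  · rintro ζ ⟨ξ, ⟨hξ1, hξ2⟩, rfl⟩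
    set u := Real.sqrt (-ξ) with hu
    have hu2 : u^2 = -ξ := Real.sq_sqrt (by linarith)
    have hu0 : 0 < u := Real.sqrt_pos.2 (by linarith)
    have habs : |ξ| = -ξ := abs_of_neg hξ2
    have hq : u^2 < 1/(4*y^2) := by linarith
    have h' : u^2*(4*y^2) < 1 := (lt_div_iff₀ (by positivity)).1 hq
    have huc : 2*y*u < 1 := by nlinarith [sq_nonneg (2*y*u - 1), mul_pos hy hu0]
    constructor
    · show 0 < y * ξ + Real.sqrt |ξ|
      rw [habs, ← hu]; nlinarith
    · show y * ξ + Real.sqrt |ξ| < 1/(4*y)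
      rw [habs, ← hu]
      have : 0 < (1 - 2*y*u)^2 := pow_pos (by linarith) 2
      have h4 : (4*y)*(y*ξ + u) < (4*y)*(1/(4*y)) := by
        rw [mul_one_div, div_self (by positivity : (4*y) ≠ 0)]; nlinarith
      exact lt_of_mul_lt_mul_left h4 (by positivity)
  · rintro ζ ⟨hζ1, hζ2⟩
    set r := Real.sqrt (1 - 4*y*ζ) with hr
    have h4yζ : 4*y*ζ < 1 := by
      have := (lt_div_iff₀ (by positivity : (0:ℝ) < 4*y)).1 hζ2; linarith
    have hr2 : r^2 = 1 - 4*y*ζ := Real.sq_sqrt (by linarith)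
    have hr0 : 0 < r := Real.sqrt_pos.2 (by linarith)
    have hr1 : r < 1 := by nlinarith [Real.sqrt_nonneg (1-4*y*ζ)]
    set u := (1 - r)/(2*y) with hu
    have hu0 : 0 < u := div_pos (by linarith) (by linarith)
    have h1 : 2*y*u = 1 - r := by rw [hu]; field_simp
    refine ⟨-u^2, ⟨?_, by nlinarith⟩, ?_⟩
    · have : u^2 < 1/(4*y^2) := by
        rw [lt_div_iff₀ (by positivity : (0:ℝ) < 4*y^2)]; nlinarith
      linarith
    · show y * (-u^2) + Real.sqrt |(-u^2)| = ζ
      rw [abs_neg, abs_of_nonneg (sq_nonneg u), Real.sqrt_sq hu0.le]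
      have h4 : (4*y)*(y*(-u^2) + u) = (4*y)*ζ := by nlinarith
      have := mul_left_cancel₀ (by positivity : (4*y) ≠ 0) h4
      linarith

lemma img_low (hy : 0 < y) :
    (fun ξ : ℝ => y * ξ + Real.sqrt |ξ|) '' Set.Iio (-(1/(4*y^2)))
      = Set.Iio (1/(4*y)) := by
  apply Set.Subset.antisymm
  · rintro ζ ⟨ξ, hξ, rfl⟩
    have hξ' : ξ < -(1/(4*y^2)) := hξ
    have hξneg : ξ < 0 := by
      have : (0:ℝ) < 1/(4*y^2) := by positivity
      linarith
    set u := Real.sqrt (-ξ) with hu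
    have hu2 : u^2 = -ξ := Real.sq_sqrt (by linarith)
    have hu0 : 0 < u := Real.sqrt_pos.2 (by linarith)
    have habs : |ξ| = -ξ := abs_of_neg hξneg
    have hq : 1/(4*y^2) < u^2 := by linarith
    have h' : 1 < u^2*(4*y^2) := (div_lt_iff₀ (by positivity)).1 hq
    have huc : 1 < 2*y*u := by nlinarith [mul_pos hy hu0]
    show y * ξ + Real.sqrt |ξ| < 1/(4*y)
    rw [habs, ← hu]
    have h4 : (4*y)*(y*ξ + u) < (4*y)*(1/(4*y)) := by
      rw [mul_one_div, div_self (by positivity : (4*y) ≠ 0)]; nlinarith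
    exact lt_of_mul_lt_mul_left h4 (by positivity)
  · intro ζ hζ
    have hζ' : ζ < 1/(4*y) := hζ
    have h4yζ : 4*y*ζ < 1 := by
      have := (lt_div_iff₀ (by positivity : (0:ℝ) < 4*y)).1 hζ'; linarith
    set r := Real.sqrt (1 - 4*y*ζ) with hr
    have hr2 : r^2 = 1 - 4*y*ζ := Real.sq_sqrt (by linarith)
    have hr0 : 0 < r := Real.sqrt_pos.2 (by linarith)
    set u := (1 + r)/(2*y) with hu
    have hu0 : 0 < u := div_pos (by linarith) (by linarith)
    have h1 : 2*y*u = 1 + r := by rw [hu]; field_simp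
    refine ⟨-u^2, ?_, ?_⟩
    · show -u^2 < -(1/(4*y^2))
      have : 1/(4*y^2) < u^2 := by
        rw [div_lt_iff₀ (by positivity : (0:ℝ) < 4*y^2)]; nlinarith
      linarith
    · show y * (-u^2) + Real.sqrt |(-u^2)| = ζ
      rw [abs_neg, abs_of_nonneg (sq_nonneg u), Real.sqrt_sq hu0.le]
      have h4 : (4*y)*(y*(-u^2) + u) = (4*y)*ζ := by nlinarith
      have := mul_left_cancel₀ (by positivity : (4*y) ≠ 0) h4
      linarith

end aux


section aux2
variable {y : ℝ}

lemma inj_pos (hy : 0 < y) :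
    Set.InjOn (fun ξ : ℝ => y * ξ + Real.sqrt |ξ|) (Set.Ioi 0) := by
  have : StrictMonoOn (fun ξ : ℝ => y * ξ + Real.sqrt |ξ|) (Set.Ioi 0) := by
    intro a ha b hb hab
    simp only
    rw [abs_of_pos ha, abs_of_pos hb]
    exact add_lt_add (mul_lt_mul_of_pos_left hab hy)
      (Real.sqrt_lt_sqrt (le_of_lt ha) hab)
  exact this.injOn

lemma inj_mid (hy : 0 < y) :
    Set.InjOn (fun ξ : ℝ => y * ξ + Real.sqrt |ξ|) (Set.Ioo (-(1/(4*y^2))) 0) := by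
  have : StrictAntiOn (fun ξ : ℝ => y * ξ + Real.sqrt |ξ|) (Set.Ioo (-(1/(4*y^2))) 0) := by
    intro a ⟨ha1, ha2⟩ b ⟨hb1, hb2⟩ hab
    simp only
    rw [abs_of_neg ha2, abs_of_neg hb2]
    set p := Real.sqrt (-a) with hp
    set q := Real.sqrt (-b) with hq
    have hp2 : p^2 = -a := Real.sq_sqrt (by linarith)
    have hq2 : q^2 = -b := Real.sq_sqrt (by linarith)
    have hp0 : 0 < p := Real.sqrt_pos.2 (by linarith)
    have hq0 : 0 < q := Real.sqrt_pos.2 (by linarith)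
    have hpq : q < p := Real.sqrt_lt_sqrt (by linarith) (by linarith)
    have h'a : p^2*(4*y^2) < 1 := (lt_div_iff₀ (by positivity)).1 (by linarith)
    have h'b : q^2*(4*y^2) < 1 := (lt_div_iff₀ (by positivity)).1 (by linarith)
    have hyp : 2*y*p < 1 := by nlinarith [mul_pos hy hp0]
    have hyq : 2*y*q < 1 := by nlinarith [mul_pos hy hq0]
    show y * b + q < y * a + p
    nlinarith [mul_pos (sub_pos.2 hpq) (show 0 < 1 - y*(p+q) by linarith)]
  exact this.injOn

lemma inj_low (hy : 0 < y) :
    Set.InjOn (fun ξ : ℝ => y * ξ + Real.sqrt |ξ|) (Set.Iio (-(1/(4*y^2)))) := by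
  have hc : (0:ℝ) < 1/(4*y^2) := by positivity
  have : StrictMonoOn (fun ξ : ℝ => y * ξ + Real.sqrt |ξ|) (Set.Iio (-(1/(4*y^2)))) := by
    intro a ha b hb hab
    have ha' : a < 0 := by have := Set.mem_Iio.1 ha; linarith
    have hb' : b < 0 := by have := Set.mem_Iio.1 hb; linarith
    simp only
    rw [abs_of_neg ha', abs_of_neg hb']
    set p := Real.sqrt (-a) with hp
    set q := Real.sqrt (-b) with hq
    have hp2 : p^2 = -a := Real.sq_sqrt (by linarith)
    have hq2 : q^2 = -b := Real.sq_sqrt (by linarith)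
    have hq0 : 0 < q := Real.sqrt_pos.2 (by linarith)
    have hpq : q < p := Real.sqrt_lt_sqrt (by linarith) (by linarith)
    have h'b : 1 < q^2*(4*y^2) :=
      (div_lt_iff₀ (by positivity)).1 (by have := Set.mem_Iio.1 hb; linarith)
    have hyq : 1 < 2*y*q := by nlinarith [mul_pos hy hq0]
    show y * a + p < y * b + q
    nlinarith [mul_pos (sub_pos.2 hpq) (show 0 < y*(p+q) - 1 by nlinarith)]
  exact this.injOn

lemma deriv_pos_branch (y : ℝ) {ξ : ℝ} (hξ : ξ ∈ Set.Ioi (0:ℝ)) :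
    HasDerivWithinAt (fun ξ : ℝ => y * ξ + Real.sqrt |ξ|)
      (y + 1/(2*Real.sqrt ξ)) (Set.Ioi 0) ξ := by
  have hξ' : (0:ℝ) < ξ := hξ
  have h1 : HasDerivAt (fun x : ℝ => y * x + Real.sqrt x)
      (y + 1/(2*Real.sqrt ξ)) ξ := by
    have := ((hasDerivAt_id ξ).const_mul y).add (Real.hasDerivAt_sqrt (ne_of_gt hξ'))
    simpa [Pi.add_def] using this
  have h2 : (fun ξ : ℝ => y * ξ + Real.sqrt |ξ|) =ᶠ[nhds ξ]
      (fun x : ℝ => y * x + Real.sqrt x) := by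
    filter_upwards [Ioi_mem_nhds hξ'] with x hx
    rw [abs_of_pos hx]
  exact (h1.congr_of_eventuallyEq h2).hasDerivWithinAt

lemma deriv_neg_branch (y : ℝ) {ξ : ℝ} (hξ : ξ < 0) (s : Set ℝ) :
    HasDerivWithinAt (fun ξ : ℝ => y * ξ + Real.sqrt |ξ|)
      (y - 1/(2*Real.sqrt (-ξ))) s ξ := by
  have h1 : HasDerivAt (fun x : ℝ => y * x + Real.sqrt (-x))
      (y - 1/(2*Real.sqrt (-ξ))) ξ := by
    have hs : HasDerivAt (fun x : ℝ => Real.sqrt (-x)) (1/(2*Real.sqrt (-ξ)) * (-1)) ξ :=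
      (Real.hasDerivAt_sqrt (by linarith : -ξ ≠ 0)).comp ξ (hasDerivAt_neg ξ)
    have := ((hasDerivAt_id ξ).const_mul y).add hs
    simpa [sub_eq_add_neg, Pi.add_def] using this
  have h2 : (fun ξ : ℝ => y * ξ + Real.sqrt |ξ|) =ᶠ[nhds ξ]
      (fun x : ℝ => y * x + Real.sqrt (-x)) := by
    filter_upwards [Iio_mem_nhds hξ] with x hx
    rw [abs_of_neg hx]
  exact (h1.congr_of_eventuallyEq h2).hasDerivWithinAt

-- weight identities (real-number computations)
lemma weight_pos (hy : 0 < y) {ξ : ℝ} (hξ : 0 < ξ) :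
    |y + 1/(2*Real.sqrt ξ)| * (1/4 + y * (y * ξ + Real.sqrt |ξ|)) ^ (-(1/2) : ℝ)
      = |ξ| ^ (-(1/2) : ℝ) := by
  set u := Real.sqrt ξ with hu
  have hu2 : u^2 = ξ := Real.sq_sqrt hξ.le
  have hu0 : 0 < u := Real.sqrt_pos.2 hξ
  have habs : |ξ| = ξ := abs_of_pos hξ
  have hkey : 1/4 + y * (y * ξ + Real.sqrt |ξ|) = (1/2 + y*u)^2 := by
    rw [habs, ← hu]; linear_combination (-y^2) * hu2
  have h12 : (0:ℝ) < 1/2 + y*u := by positivity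
  rw [hkey, habs, ← hu2]
  rw [Real.rpow_neg (sq_nonneg _), Real.rpow_neg (sq_nonneg _),
    ← Real.sqrt_eq_rpow, ← Real.sqrt_eq_rpow,
    Real.sqrt_sq h12.le, Real.sqrt_sq hu0.le,
    abs_of_pos (by positivity : (0:ℝ) < y + 1/(2*u))]
  field_simp
  ring

lemma weight_neg (hy : 0 < y) {ξ : ℝ} (hξ : ξ < 0) (hne : ξ ≠ -(1/(4*y^2))) :
    |y - 1/(2*Real.sqrt (-ξ))| * (1/4 - y * (y * ξ + Real.sqrt |ξ|)) ^ (-(1/2) : ℝ)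
      = |ξ| ^ (-(1/2) : ℝ) := by
  set u := Real.sqrt (-ξ) with hu
  have hu2 : u^2 = -ξ := Real.sq_sqrt (by linarith)
  have hu0 : 0 < u := Real.sqrt_pos.2 (by linarith)
  have habs : |ξ| = -ξ := abs_of_neg hξ
  have hkey : 1/4 - y * (y * ξ + Real.sqrt |ξ|) = (1/2 - y*u)^2 := by
    rw [habs, ← hu]; linear_combination (-(y^2)) * hu2
  have hA : 1/2 - y*u ≠ 0 := by
    intro h0
    apply hne
    have huv : u = 1/(2*y) := by
      field_simp at h0 ⊢
      linarith
    have : u^2 = 1/(4*y^2) := by rw [huv]; field_simp; ring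
    linarith [hu2.symm.trans this]
  have habs2 : |y - 1/(2*u)| = |1/2 - y*u| / u := by
    rw [eq_div_iff hu0.ne']
    have hmu : (y - 1/(2*u)) * u = -(1/2 - y*u) := by field_simp; ring
    calc |y - 1/(2*u)| * u = |(y - 1/(2*u)) * u| := by rw [abs_mul, abs_of_pos hu0]
      _ = |1/2 - y*u| := by rw [hmu, abs_neg]
  rw [hkey, habs, ← hu2]
  rw [Real.rpow_neg (sq_nonneg _), Real.rpow_neg (sq_nonneg _),
    ← Real.sqrt_eq_rpow, ← Real.sqrt_eq_rpow,
    Real.sqrt_sq_eq_abs, Real.sqrt_sq hu0.le, habs2]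
  rw [div_mul_eq_mul_div, mul_inv_cancel₀ (abs_ne_zero.2 hA), one_div]
end aux2


/-- exact change-of-variables identity for the water-wave phase
`yξ + |ξ|^{1/2}` (case `a = 1/2`), as an equality in `[0,∞]`. -/
theorem change_of_variables_identity_a_half (y : ℝ) (hy : 0 < y)
    (F : ℝ → ℂ) (hF : Measurable F) :
    (∫⁻ ξ : ℝ, ENNReal.ofReal (|ξ| ^ (-(1/2) : ℝ)) *
        (‖F (y * ξ + |ξ| ^ ((1:ℝ)/2))‖₊ : ℝ≥0∞) ^ 2)
      = (∫⁻ ζ : ℝ, (‖F ζ‖₊ : ℝ≥0∞) ^ 2 *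
            ENNReal.ofReal ((1/4 + y * |ζ|) ^ (-(1/2) : ℝ)))
        + 2 * ∫⁻ ζ in Set.Ioo (0:ℝ) (1/(4*y)),
            (‖F ζ‖₊ : ℝ≥0∞) ^ 2 * ENNReal.ofReal ((1/4 - y * ζ) ^ (-(1/2) : ℝ)) := by
  have hc : (0:ℝ) < 1/(4*y^2) := by positivity
  have hb : (0:ℝ) < 1/(4*y) := by positivity
  set G : ℝ → ℝ≥0∞ := fun ζ => (‖F ζ‖₊ : ℝ≥0∞) ^ 2 with hG
  set H : ℝ → ℝ≥0∞ := fun ξ => ENNReal.ofReal (|ξ| ^ (-(1/2) : ℝ)) *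
      G (y * ξ + Real.sqrt |ξ|) with hH
  set gp : ℝ → ℝ≥0∞ := fun ζ => ENNReal.ofReal ((1/4 + y * ζ) ^ (-(1/2) : ℝ)) * G ζ with hgp
  set gm : ℝ → ℝ≥0∞ := fun ζ => ENNReal.ofReal ((1/4 - y * ζ) ^ (-(1/2) : ℝ)) * G ζ with hgm
  -- Step 1: LHS equals ∫ H
  have hL : (∫⁻ ξ : ℝ, ENNReal.ofReal (|ξ| ^ (-(1/2) : ℝ)) *
        (‖F (y * ξ + |ξ| ^ ((1:ℝ)/2))‖₊ : ℝ≥0∞) ^ 2) = ∫⁻ ξ, H ξ := by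
    apply lintegral_congr
    intro ξ
    rw [hH]
    simp only [← Real.sqrt_eq_rpow]
    rfl
  -- Step 2: three branch identities
  have Bp : (∫⁻ ζ in Set.Ioi (0:ℝ), gp ζ) = ∫⁻ ξ in Set.Ioi (0:ℝ), H ξ := by
    have key := my_lintegral_image measurableSet_Ioi
      (fun ξ hξ => deriv_pos_branch y hξ) (inj_pos hy) gp
    rw [img_pos hy] at key
    rw [key]
    apply setLIntegral_congr_fun measurableSet_Ioi
    intro ξ hξ
    simp only [hgp, hH]
    rw [← mul_assoc, ← ENNReal.ofReal_mul (abs_nonneg _), weight_pos hy hξ]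
  have Bm : (∫⁻ ζ in Set.Ioo (0:ℝ) (1/(4*y)), gm ζ)
      = ∫⁻ ξ in Set.Ioo (-(1/(4*y^2))) (0:ℝ), H ξ := by
    have key := my_lintegral_image measurableSet_Ioo
      (fun ξ (hξ : ξ ∈ Set.Ioo (-(1/(4*y^2))) (0:ℝ)) => deriv_neg_branch y hξ.2 _) (inj_mid hy) gm
    rw [img_mid hy] at key
    rw [key]
    apply setLIntegral_congr_fun measurableSet_Ioo
    intro ξ hξ
    simp only [hgm, hH]
    rw [← mul_assoc, ← ENNReal.ofReal_mul (abs_nonneg _),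
      weight_neg hy hξ.2 (by intro h; rw [h] at hξ; exact lt_irrefl _ hξ.1)]
  have Bl : (∫⁻ ζ in Set.Iio (1/(4*y)), gm ζ)
      = ∫⁻ ξ in Set.Iio (-(1/(4*y^2))), H ξ := by
    have hneg : ∀ ξ : ℝ, ξ ∈ Set.Iio (-(1/(4*y^2))) → ξ < 0 := fun ξ hξ => by
      have : ξ < -(1/(4*y^2)) := hξ; linarith
    have key := my_lintegral_image measurableSet_Iio
      (fun ξ hξ => deriv_neg_branch y (hneg ξ hξ) _) (inj_low hy) gm
    rw [img_low hy] at key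
    rw [key]
    apply setLIntegral_congr_fun measurableSet_Iio
    intro ξ hξ
    simp only [hgm, hH]
    rw [← mul_assoc, ← ENNReal.ofReal_mul (abs_nonneg _),
      weight_neg hy (hneg ξ hξ) (ne_of_lt hξ)]
  -- Step 3: RHS first integral splits
  have R1 : (∫⁻ ζ : ℝ, G ζ * ENNReal.ofReal ((1/4 + y * |ζ|) ^ (-(1/2) : ℝ)))
      = (∫⁻ ζ in Set.Iio (0:ℝ), gm ζ) + ∫⁻ ζ in Set.Ioi (0:ℝ), gp ζ := by
    rw [my_split_line _ 0]
    congr 1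
    · apply setLIntegral_congr_fun measurableSet_Iio
      intro ζ hζ
      have : |ζ| = -ζ := abs_of_neg hζ
      beta_reduce
      rw [this, hgm, mul_comm]
      ring_nf
    · apply setLIntegral_congr_fun measurableSet_Ioi
      intro ζ hζ
      have : |ζ| = ζ := abs_of_pos hζ
      beta_reduce
      rw [this, hgp, mul_comm]
  have R2 : (∫⁻ ζ in Set.Ioo (0:ℝ) (1/(4*y)),
        (‖F ζ‖₊ : ℝ≥0∞) ^ 2 * ENNReal.ofReal ((1/4 - y * ζ) ^ (-(1/2) : ℝ)))
      = ∫⁻ ζ in Set.Ioo (0:ℝ) (1/(4*y)), gm ζ := by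
    apply setLIntegral_congr_fun measurableSet_Ioo
    intro ζ _
    beta_reduce
    rw [hgm, mul_comm]
  -- Step 4: assemble
  rw [hL, R2, my_split_line H 0, my_split_Iio H (by linarith : -(1/(4*y^2)) ≤ 0),
    ← Bp, ← Bm, ← Bl, R1, my_split_Iio gm hb.le]
  ring
end

section
/- There is an absolute constant C>0 such that for every x∈ℝ with x≠0, the improper integral k(x) := lim_{R→∞} 2∫_0^R e^{iζ}( e^{i x ζ²} − e^{−i x ζ²} ) dζ exists and satisfies |k(x)| ≤ C·|x|^{-1/2}. -/
open MeasureTheory Real Filter intervalIntegral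

noncomputable def fres (T : ℝ) : ℂ := ∫ v in (0:ℝ)..T, Complex.exp (Complex.I * (v:ℂ)^2)

lemma contf : Continuous (fun v : ℝ => Complex.exp (Complex.I * (v:ℂ)^2)) :=
  Complex.continuous_exp.comp (continuous_const.mul (Complex.continuous_ofReal.pow 2))

lemma normf (v : ℝ) : ‖Complex.exp (Complex.I * (v:ℂ)^2)‖ = 1 := by
  rw [Complex.norm_exp]
  have : (Complex.I * (v:ℂ)^2).re = 0 := by simp [Complex.mul_re, pow_two]
  rw [this, Real.exp_zero]

noncomputable def uu (t : ℝ) : ℂ := (2*Complex.I*(t:ℂ))⁻¹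
noncomputable def ud (t : ℝ) : ℂ := -(2*Complex.I) / (2*Complex.I*(t:ℂ))^2
noncomputable def phi (t : ℝ) : ℂ := ud t * Complex.exp (Complex.I*(t:ℂ)^2)

lemma twoIt_ne {t : ℝ} (ht : t ≠ 0) : 2*Complex.I*(t:ℂ) ≠ 0 := by
  simp [Complex.I_ne_zero, Complex.ofReal_ne_zero, ht]

lemma hasDerivAt_uu {t : ℝ} (ht : t ≠ 0) : HasDerivAt uu (ud t) t := by
  have h1 : HasDerivAt (fun z : ℂ => 2*Complex.I*z) (2*Complex.I) ((t:ℝ):ℂ) := by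
    simpa using (hasDerivAt_id ((t:ℝ):ℂ)).const_mul (2*Complex.I)
  have h : HasDerivAt (fun z : ℂ => (2*Complex.I*z)⁻¹)
      (-(2*Complex.I) / (2*Complex.I*(t:ℂ))^2) (t:ℂ) := h1.inv (twoIt_ne ht)
  exact h.comp_ofReal

lemma hasDerivAt_v (t : ℝ) :
    HasDerivAt (fun s : ℝ => Complex.exp (Complex.I*(s:ℂ)^2))
      (Complex.exp (Complex.I*(t:ℂ)^2) * (2*Complex.I*(t:ℂ))) t := by
  have h1 : HasDerivAt (fun z : ℂ => Complex.I*z^2) (Complex.I*(2*(t:ℂ))) ((t:ℝ):ℂ) := by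
    simpa using (hasDerivAt_pow 2 ((t:ℝ):ℂ)).const_mul Complex.I
  have h := h1.cexp
  have h2 := h.comp_ofReal
  convert h2 using 1
  ring

lemma norm_uu (t : ℝ) : ‖uu t‖ = (2*|t|)⁻¹ := by
  simp [uu, map_inv₀, map_mul, Complex.norm_I]

lemma norm_phi_eq {t : ℝ} : ‖phi t‖ = 2 / (2*|t|)^2 := by
  simp [phi, ud, map_div₀, map_mul, map_pow, normf, Complex.norm_I]

lemma norm_phi_le {t : ℝ} (ht : 1 ≤ t) : ‖phi t‖ ≤ t ^ (-2:ℝ) := by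
  have ht0 : (0:ℝ) < t := lt_of_lt_of_le one_pos ht
  have h2 : t ^ (-2:ℝ) = (t^2)⁻¹ := by
    rw [Real.rpow_neg ht0.le]
    congr 1
    rw [show (2:ℝ) = ((2:ℕ):ℝ) by norm_num, Real.rpow_natCast]
  rw [norm_phi_eq, abs_of_pos ht0, h2]
  rw [div_le_iff₀ (by positivity)]
  have : (2*t)^2 = 4*t^2 := by ring
  rw [this]
  rw [inv_mul_eq_div, le_div_iff₀ (by positivity)]
  nlinarith

lemma phi_contOn : ContinuousOn phi {(0:ℝ)}ᶜ := by
  apply ContinuousOn.mul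
  · apply ContinuousOn.div continuousOn_const
    · fun_prop
    · intro t ht
      exact pow_ne_zero 2 (twoIt_ne (by simpa using ht))
  · exact contf.continuousOn

lemma rpow2_integrable : IntegrableOn (fun t : ℝ => t ^ (-2:ℝ)) (Set.Ioi 1) :=
  integrableOn_Ioi_rpow_of_lt (by norm_num) one_pos

lemma rpow2_integral : ∫ t in Set.Ioi (1:ℝ), t ^ (-2:ℝ) = 1 := by
  rw [integral_Ioi_rpow_of_lt (by norm_num) one_pos]
  norm_num

lemma phi_integrable : IntegrableOn phi (Set.Ioi 1) := by
  have hm : AEStronglyMeasurable phi (volume.restrict (Set.Ioi (1:ℝ))) := by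
    apply ContinuousOn.aestronglyMeasurable (phi_contOn.mono ?_) measurableSet_Ioi
    intro t ht
    simp only [Set.mem_compl_iff, Set.mem_singleton_iff]
    intro h; rw [h] at ht; exact absurd ht (by norm_num)
  refine Integrable.mono' rpow2_integrable hm ?_
  filter_upwards [ae_restrict_mem measurableSet_Ioi] with t ht
  exact norm_phi_le (le_of_lt ht)

lemma phi_tail_bound : ‖∫ t in Set.Ioi (1:ℝ), phi t‖ ≤ 1 := by
  calc ‖∫ t in Set.Ioi (1:ℝ), phi t‖ ≤ ∫ t in Set.Ioi (1:ℝ), t ^ (-2:ℝ) := by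
        apply MeasureTheory.norm_integral_le_of_norm_le rpow2_integrable
        filter_upwards [ae_restrict_mem measurableSet_Ioi] with t ht
        exact norm_phi_le (le_of_lt ht)
    _ = 1 := rpow2_integral

lemma phi_finite_bound {T : ℝ} (hT : 1 ≤ T) : ‖∫ t in (1:ℝ)..T, phi t‖ ≤ 1 := by
  rw [intervalIntegral.integral_of_le hT]
  calc ‖∫ t in Set.Ioc (1:ℝ) T, phi t‖ ≤ ∫ t in Set.Ioc (1:ℝ) T, t ^ (-2:ℝ) := by
        apply MeasureTheory.norm_integral_le_of_norm_le (rpow2_integrable.mono_set Set.Ioc_subset_Ioi_self)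
        filter_upwards [ae_restrict_mem measurableSet_Ioc] with t ht
        exact norm_phi_le (le_of_lt ht.1)
    _ ≤ ∫ t in Set.Ioi (1:ℝ), t ^ (-2:ℝ) := by
        apply setIntegral_mono_set rpow2_integrable
        · filter_upwards [ae_restrict_mem measurableSet_Ioi] with t ht
          exact Real.rpow_nonneg (le_of_lt (lt_trans one_pos (Set.mem_Ioi.mp ht))) _
        · exact HasSubset.Subset.eventuallyLE Set.Ioc_subset_Ioi_self
    _ = 1 := rpow2_integral

lemma ud_intervalIntegrable {T : ℝ} (hT : 1 ≤ T) : IntervalIntegrable ud volume 1 T := by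
  apply ContinuousOn.intervalIntegrable
  apply ContinuousOn.div continuousOn_const
  · fun_prop
  · intro t ht
    rw [Set.uIcc_of_le hT] at ht
    exact pow_ne_zero 2 (twoIt_ne (by linarith [ht.1]))

lemma fres_eq {T : ℝ} (hT : 1 ≤ T) :
    fres T = fres 1 + (uu T * Complex.exp (Complex.I*((T:ℝ):ℂ)^2)
      - uu 1 * Complex.exp (Complex.I*((1:ℝ):ℂ)^2) - ∫ t in (1:ℝ)..T, phi t) := by
  have hsplit : fres 1 + (∫ v in (1:ℝ)..T, Complex.exp (Complex.I * (v:ℂ)^2)) = fres T :=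
    integral_add_adjacent_intervals (contf.intervalIntegrable _ _) (contf.intervalIntegrable _ _)
  rw [← hsplit]
  congr 1
  have hcong : (∫ v in (1:ℝ)..T, Complex.exp (Complex.I * (v:ℂ)^2))
      = ∫ t in (1:ℝ)..T, uu t * (Complex.exp (Complex.I*(t:ℂ)^2) * (2*Complex.I*(t:ℂ))) := by
    apply intervalIntegral.integral_congr
    intro t ht
    rw [Set.uIcc_of_le hT] at ht
    have hne := twoIt_ne (t := t) (by linarith [ht.1])
    simp only [uu]
    rw [mul_comm (Complex.exp _), ← mul_assoc, inv_mul_cancel₀ hne, one_mul]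
  rw [hcong]
  rw [intervalIntegral.integral_mul_deriv_eq_deriv_mul
    (u := uu) (u' := ud) (v := fun t : ℝ => Complex.exp (Complex.I*(t:ℂ)^2))
    (v' := fun t : ℝ => Complex.exp (Complex.I*(t:ℂ)^2) * (2*Complex.I*(t:ℂ)))
    ?_ ?_ (ud_intervalIntegrable hT) ((contf.mul (by fun_prop)).intervalIntegrable _ _)]
  · rfl
  · intro x hx
    rw [Set.uIcc_of_le hT] at hx
    exact hasDerivAt_uu (by linarith [hx.1])
  · intro x hx
    exact hasDerivAt_v x

lemma fres_odd (T : ℝ) : fres (-T) = - fres T := by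
  have h := intervalIntegral.integral_comp_neg (a := (0:ℝ)) (b := T)
    (fun v : ℝ => Complex.exp (Complex.I * (v:ℂ)^2))
  have h2 : (∫ x in (0:ℝ)..T, Complex.exp (Complex.I * ((-x:ℝ):ℂ)^2)) = fres T := by
    apply intervalIntegral.integral_congr
    intro x _
    simp [Complex.ofReal_neg, neg_sq]
  rw [h2] at h
  simp only [neg_zero] at h
  calc fres (-T) = ∫ v in (0:ℝ)..(-T), Complex.exp (Complex.I * (v:ℂ)^2) := rfl
    _ = -∫ v in (-T)..(0:ℝ), Complex.exp (Complex.I * (v:ℂ)^2) :=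
        intervalIntegral.integral_symm _ _
    _ = - fres T := by rw [← h]

lemma norm_fres_one : ‖fres 1‖ ≤ 1 := by
  have := intervalIntegral.norm_integral_le_of_norm_le_const
    (C := 1) (f := fun v : ℝ => Complex.exp (Complex.I * (v:ℂ)^2)) (a := (0:ℝ)) (b := 1)
    (fun x _ => le_of_eq (normf x))
  simpa [fres] using this

lemma norm_fres_le_of_small {T : ℝ} (h0 : 0 ≤ T) (h1 : T ≤ 1) : ‖fres T‖ ≤ 1 := by
  have := intervalIntegral.norm_integral_le_of_norm_le_const
    (C := 1) (f := fun v : ℝ => Complex.exp (Complex.I * (v:ℂ)^2)) (a := (0:ℝ)) (b := T)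
    (fun x _ => le_of_eq (normf x))
  rw [sub_zero, abs_of_nonneg h0, one_mul] at this
  exact this.trans h1

lemma norm_fres_le_of_big {T : ℝ} (hT : 1 ≤ T) : ‖fres T‖ ≤ 3 := by
  rw [fres_eq hT]
  have h1 : ‖uu T * Complex.exp (Complex.I*((T:ℝ):ℂ)^2)‖ ≤ 1/2 := by
    rw [norm_mul, normf, mul_one, norm_uu, abs_of_nonneg (by linarith)]
    rw [inv_le_comm₀ (by linarith) (by norm_num)]
    linarith
  have h2 : ‖uu 1 * Complex.exp (Complex.I*((1:ℝ):ℂ)^2)‖ ≤ 1/2 := by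
    rw [norm_mul, normf, mul_one, norm_uu]
    norm_num
  calc ‖fres 1 + (uu T * Complex.exp (Complex.I*((T:ℝ):ℂ)^2)
      - uu 1 * Complex.exp (Complex.I*((1:ℝ):ℂ)^2) - ∫ t in (1:ℝ)..T, phi t)‖
      ≤ ‖fres 1‖ + (‖uu T * Complex.exp (Complex.I*((T:ℝ):ℂ)^2)‖
        + ‖uu 1 * Complex.exp (Complex.I*((1:ℝ):ℂ)^2)‖ + ‖∫ t in (1:ℝ)..T, phi t‖) := by
        refine (norm_add_le _ _).trans ?_
        gcongr
        exact (norm_sub_le _ _).trans (by gcongr; exact norm_sub_le _ _)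
    _ ≤ 3 := by
        have ha := norm_fres_one
        have hb := phi_finite_bound hT
        linarith

lemma norm_fres_le (T : ℝ) : ‖fres T‖ ≤ 3 := by
  rcases le_total 0 T with h0 | h0
  · rcases le_total T 1 with h1 | h1
    · exact (norm_fres_le_of_small h0 h1).trans (by norm_num)
    · exact norm_fres_le_of_big h1
  · have : fres T = - fres (-T) := by rw [← fres_odd, neg_neg]
    rw [this, norm_neg]
    rcases le_total (-T) 1 with h1 | h1
    · exact (norm_fres_le_of_small (by linarith) h1).trans (by norm_num)
    · exact norm_fres_le_of_big h1

lemma fres_lim : ∃ L : ℂ, Tendsto fres atTop (nhds L) ∧ ‖L‖ ≤ 3 := by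
  set Φ := ∫ t in Set.Ioi (1:ℝ), phi t with hΦ
  refine ⟨fres 1 + (0 - uu 1 * Complex.exp (Complex.I*((1:ℝ):ℂ)^2) - Φ), ?_, ?_⟩
  · have h0 : Tendsto (fun T : ℝ => uu T * Complex.exp (Complex.I*((T:ℝ):ℂ)^2))
        atTop (nhds 0) := by
      apply squeeze_zero_norm' (a := fun T : ℝ => T⁻¹) ?_ tendsto_inv_atTop_zero
      filter_upwards [eventually_ge_atTop (1:ℝ)] with T hT
      rw [norm_mul, normf, mul_one, norm_uu, abs_of_nonneg (by linarith)]
      rw [inv_le_inv₀ (by linarith) (by linarith)]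
      linarith
    have h2 : Tendsto (fun T : ℝ => ∫ t in (1:ℝ)..T, phi t) atTop (nhds Φ) :=
      intervalIntegral_tendsto_integral_Ioi 1 phi_integrable tendsto_id
    have hc : Tendsto (fun _ : ℝ => uu 1 * Complex.exp (Complex.I*((1:ℝ):ℂ)^2)) atTop
        (nhds (uu 1 * Complex.exp (Complex.I*((1:ℝ):ℂ)^2))) := tendsto_const_nhds
    have h3 := (tendsto_const_nhds (x := fres 1) (f := atTop (α := ℝ))).add ((h0.sub hc).sub h2)
    apply h3.congr'
    filter_upwards [eventually_ge_atTop (1:ℝ)] with T hT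
    exact (fres_eq hT).symm
  · have h2 : ‖uu 1 * Complex.exp (Complex.I*((1:ℝ):ℂ)^2)‖ ≤ 1/2 := by
      rw [norm_mul, normf, mul_one, norm_uu]; norm_num
    calc ‖fres 1 + (0 - uu 1 * Complex.exp (Complex.I*((1:ℝ):ℂ)^2) - Φ)‖
        ≤ ‖fres 1‖ + (‖(0:ℂ)‖ + ‖uu 1 * Complex.exp (Complex.I*((1:ℝ):ℂ)^2)‖ + ‖Φ‖) := by
          refine (norm_add_le _ _).trans ?_
          gcongr
          exact (norm_sub_le _ _).trans (by gcongr; exact norm_sub_le _ _)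
      _ ≤ 3 := by
          have ha := norm_fres_one
          have hb := phi_tail_bound
          have hz : ‖(0:ℂ)‖ = 0 := norm_zero
          linarith

lemma main_pos (a : ℝ) (ha : 0 < a) (b : ℝ) :
    ∃ K : ℂ, Tendsto (fun R : ℝ => ∫ ζ in (0:ℝ)..R,
        Complex.exp (Complex.I * ((a*ζ^2 + b*ζ : ℝ) : ℂ))) atTop (nhds K)
      ∧ ‖K‖ ≤ 6 * (Real.sqrt a)⁻¹ := by
  obtain ⟨L, hLt, hLb⟩ := fres_lim
  set s := Real.sqrt a with hs
  have hs0 : 0 < s := Real.sqrt_pos.2 ha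
  have hsne : s ≠ 0 := ne_of_gt hs0
  have hsq : s^2 = a := Real.sq_sqrt ha.le
  set c := b/(2*a) with hc
  set θ := b^2/(4*a) with hθ
  set g : ℝ → ℂ := fun u => Complex.exp (Complex.I * ((a*u^2 : ℝ) : ℂ)) with hg
  have hgcont : Continuous g := by
    apply Complex.continuous_exp.comp
    apply continuous_const.mul
    fun_prop
  have hFrA : ∀ T : ℝ, (∫ u in (0:ℝ)..T, g u) = s⁻¹ • fres (T * s) := by
    intro T
    have h1 : ∀ u : ℝ, g u = Complex.exp (Complex.I * ((u*s : ℝ):ℂ)^2) := by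
      intro u
      simp only [hg]
      have huv : (u*s)^2 = a*u^2 := by rw [mul_pow, hsq]; ring
      rw [← Complex.ofReal_pow, huv]
    have h2 := intervalIntegral.integral_comp_mul_right
      (fun v : ℝ => Complex.exp (Complex.I*(v:ℂ)^2)) hsne (a := 0) (b := T)
    rw [zero_mul] at h2
    calc (∫ u in (0:ℝ)..T, g u)
        = ∫ u in (0:ℝ)..T, Complex.exp (Complex.I * ((u*s:ℝ):ℂ)^2) :=
          intervalIntegral.integral_congr (fun u _ => h1 u)
      _ = s⁻¹ • fres (T*s) := h2
  have hFrAb : ∀ T : ℝ, ‖∫ u in (0:ℝ)..T, g u‖ ≤ 3 * s⁻¹ := by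
    intro T
    rw [hFrA, norm_smul, norm_inv, Real.norm_eq_abs, abs_of_pos hs0]
    calc s⁻¹ * ‖fres (T*s)‖ ≤ s⁻¹ * 3 := by
          gcongr
          exact norm_fres_le _
      _ = 3 * s⁻¹ := by ring
  have hFrAt : Tendsto (fun T : ℝ => ∫ u in (0:ℝ)..T, g u) atTop (nhds (s⁻¹ • L)) := by
    have hTs : Tendsto (fun T : ℝ => T * s) atTop atTop :=
      Tendsto.atTop_mul_const hs0 tendsto_id
    have h3 := (hLt.comp hTs).const_smul (s⁻¹)
    exact Tendsto.congr (fun T => (hFrA T).symm) h3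
  have key : ∀ R : ℝ, (∫ ζ in (0:ℝ)..R, Complex.exp (Complex.I * ((a*ζ^2 + b*ζ : ℝ):ℂ)))
      = Complex.exp (-(Complex.I*(θ:ℂ))) * ((∫ u in (0:ℝ)..(R+c), g u) - ∫ u in (0:ℝ)..c, g u) := by
    intro R
    have hpt : ∀ ζ : ℝ, Complex.exp (Complex.I * ((a*ζ^2 + b*ζ : ℝ):ℂ))
        = Complex.exp (-(Complex.I*(θ:ℂ))) * g (ζ + c) := by
      intro ζ
      simp only [hg]
      rw [← Complex.exp_add]
      congr 1
      have hr : a*ζ^2 + b*ζ = a*(ζ+c)^2 - θ := by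
        rw [hc, hθ]; field_simp; ring
      rw [hr]
      push_cast
      ring
    rw [intervalIntegral.integral_congr (g := fun ζ : ℝ =>
      Complex.exp (-(Complex.I*(θ:ℂ))) * g (ζ + c)) (fun ζ _ => hpt ζ)]
    rw [intervalIntegral.integral_const_mul]
    congr 1
    have h2 : (∫ ζ in (0:ℝ)..R, g (ζ + c)) = ∫ u in c..(R+c), g u := by
      have h3 := intervalIntegral.integral_comp_add_right (a := 0) (b := R) g c
      rwa [zero_add] at h3
    rw [h2, ← intervalIntegral.integral_interval_sub_left
      (hgcont.intervalIntegrable 0 (R+c)) (hgcont.intervalIntegrable 0 c)]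
  refine ⟨Complex.exp (-(Complex.I*(θ:ℂ))) * (s⁻¹ • L - ∫ u in (0:ℝ)..c, g u), ?_, ?_⟩
  · have ht : Tendsto (fun R : ℝ => ∫ u in (0:ℝ)..(R+c), g u) atTop (nhds (s⁻¹ • L)) :=
      hFrAt.comp (tendsto_atTop_add_const_right _ c tendsto_id)
    have hcc : Tendsto (fun _ : ℝ => ∫ u in (0:ℝ)..c, g u) atTop
        (nhds (∫ u in (0:ℝ)..c, g u)) := tendsto_const_nhds
    have h4 := (ht.sub hcc).const_mul (Complex.exp (-(Complex.I*(θ:ℂ))))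
    exact Tendsto.congr (fun R => (key R).symm) h4
  · rw [norm_mul]
    have hexp : ‖Complex.exp (-(Complex.I*(θ:ℂ)))‖ = 1 := by
      rw [Complex.norm_exp]
      have h5 : (-(Complex.I*(θ:ℂ))).re = 0 := by simp
      rw [h5, Real.exp_zero]
    rw [hexp, one_mul]
    have h1 : ‖s⁻¹ • L‖ ≤ 3 * s⁻¹ := by
      rw [norm_smul, norm_inv, Real.norm_eq_abs, abs_of_pos hs0]
      calc s⁻¹ * ‖L‖ ≤ s⁻¹ * 3 := by gcongr
        _ = 3 * s⁻¹ := by ring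
    have h2 := hFrAb c
    calc ‖s⁻¹ • L - ∫ u in (0:ℝ)..c, g u‖
        ≤ ‖s⁻¹ • L‖ + ‖∫ u in (0:ℝ)..c, g u‖ := norm_sub_le _ _
      _ ≤ 6 * s⁻¹ := by linarith

lemma intervalIntegral_conj {f : ℝ → ℂ} {a b : ℝ} :
    (∫ x in a..b, (starRingEnd ℂ) (f x)) = (starRingEnd ℂ) (∫ x in a..b, f x) := by
  unfold intervalIntegral
  rw [integral_conj, integral_conj, ← map_sub]

lemma pos_case (x : ℝ) (hx : 0 < x) :
    ∃ k : ℂ,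
      Tendsto (fun R : ℝ => (2 : ℂ) * ∫ ζ in Set.Ioc (0:ℝ) R,
          Complex.exp (Complex.I * (ζ : ℂ)) *
            (Complex.exp (Complex.I * ((x * ζ^2 : ℝ) : ℂ))
              - Complex.exp (-(Complex.I * ((x * ζ^2 : ℝ) : ℂ)))))
        atTop (nhds k)
      ∧ ‖k‖ ≤ 24 * |x| ^ (-(1/2) : ℝ) := by
  obtain ⟨K₁, h1t, h1b⟩ := main_pos x hx 1
  obtain ⟨K₂, h2t, h2b⟩ := main_pos x hx (-1)
  set g₁ : ℝ → ℂ := fun ζ => Complex.exp (Complex.I * ((x*ζ^2 + 1*ζ : ℝ):ℂ)) with hg₁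
  set g₂ : ℝ → ℂ := fun ζ => Complex.exp (Complex.I * ((x*ζ^2 + (-1)*ζ : ℝ):ℂ)) with hg₂
  have hcont1 : Continuous g₁ := by
    apply Complex.continuous_exp.comp; apply continuous_const.mul; fun_prop
  have hcont2 : Continuous g₂ := by
    apply Complex.continuous_exp.comp; apply continuous_const.mul; fun_prop
  have hpt : ∀ ζ : ℝ, Complex.exp (Complex.I * (ζ:ℂ)) *
      (Complex.exp (Complex.I * ((x*ζ^2 : ℝ):ℂ)) - Complex.exp (-(Complex.I * ((x*ζ^2:ℝ):ℂ))))
      = g₁ ζ - (starRingEnd ℂ) (g₂ ζ) := by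
    intro ζ
    have e2 : (starRingEnd ℂ) (g₂ ζ)
        = Complex.exp (Complex.I * (ζ:ℂ) + -(Complex.I * ((x*ζ^2:ℝ):ℂ))) := by
      simp only [hg₂]
      rw [← Complex.exp_conj, map_mul, Complex.conj_I, Complex.conj_ofReal]
      congr 1
      push_cast
      ring
    have e1 : g₁ ζ = Complex.exp (Complex.I * (ζ:ℂ) + Complex.I * ((x*ζ^2:ℝ):ℂ)) := by
      simp only [hg₁]
      congr 1
      push_cast
      ring
    rw [e1, e2, mul_sub, ← Complex.exp_add, ← Complex.exp_add]
  have hIoc : ∀ R : ℝ, 0 ≤ R →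
      (∫ ζ in Set.Ioc (0:ℝ) R, Complex.exp (Complex.I * (ζ:ℂ)) *
        (Complex.exp (Complex.I * ((x*ζ^2 : ℝ):ℂ))
          - Complex.exp (-(Complex.I * ((x*ζ^2:ℝ):ℂ)))))
      = (∫ ζ in (0:ℝ)..R, g₁ ζ) - (starRingEnd ℂ) (∫ ζ in (0:ℝ)..R, g₂ ζ) := by
    intro R hR
    rw [← intervalIntegral.integral_of_le hR]
    calc (∫ ζ in (0:ℝ)..R, Complex.exp (Complex.I * (ζ:ℂ)) *
          (Complex.exp (Complex.I * ((x*ζ^2 : ℝ):ℂ))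
            - Complex.exp (-(Complex.I * ((x*ζ^2:ℝ):ℂ)))))
        = ∫ ζ in (0:ℝ)..R, (g₁ ζ - (starRingEnd ℂ) (g₂ ζ)) :=
          intervalIntegral.integral_congr (fun ζ _ => hpt ζ)
      _ = (∫ ζ in (0:ℝ)..R, g₁ ζ) - ∫ ζ in (0:ℝ)..R, (starRingEnd ℂ) (g₂ ζ) :=
          intervalIntegral.integral_sub (hcont1.intervalIntegrable _ _)
            ((Complex.continuous_conj.comp hcont2).intervalIntegrable _ _)
      _ = (∫ ζ in (0:ℝ)..R, g₁ ζ) - (starRingEnd ℂ) (∫ ζ in (0:ℝ)..R, g₂ ζ) := by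
          rw [intervalIntegral_conj]
  refine ⟨2*(K₁ - (starRingEnd ℂ) K₂), ?_, ?_⟩
  · have hc : Tendsto (fun R : ℝ => (∫ ζ in (0:ℝ)..R, g₁ ζ)
        - (starRingEnd ℂ) (∫ ζ in (0:ℝ)..R, g₂ ζ)) atTop
        (nhds (K₁ - (starRingEnd ℂ) K₂)) :=
      h1t.sub ((Complex.continuous_conj.tendsto K₂).comp h2t)
    have h5 := hc.const_mul (2:ℂ)
    apply h5.congr'
    filter_upwards [eventually_ge_atTop (0:ℝ)] with R hR
    rw [hIoc R hR]
  · have h2' : ‖(starRingEnd ℂ) K₂‖ ≤ 6 * (Real.sqrt x)⁻¹ := by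
      rw [RCLike.norm_conj]; exact h2b
    have hrp : |x| ^ (-(1/2) : ℝ) = (Real.sqrt x)⁻¹ := by
      rw [abs_of_pos hx, Real.rpow_neg hx.le, ← Real.sqrt_eq_rpow]
    rw [hrp, norm_mul]
    have h2n : ‖(2:ℂ)‖ = 2 := by norm_num
    rw [h2n]
    calc 2 * ‖K₁ - (starRingEnd ℂ) K₂‖ ≤ 2 * (‖K₁‖ + ‖(starRingEnd ℂ) K₂‖) := by
          gcongr; exact norm_sub_le _ _
      _ ≤ 24 * (Real.sqrt x)⁻¹ := by linarith

lemma neg_flip (x R : ℝ) :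
    (∫ ζ in Set.Ioc (0:ℝ) R, Complex.exp (Complex.I * (ζ:ℂ)) *
      (Complex.exp (Complex.I * ((x * ζ^2 : ℝ):ℂ))
        - Complex.exp (-(Complex.I * ((x * ζ^2 : ℝ):ℂ)))))
    = - ∫ ζ in Set.Ioc (0:ℝ) R, Complex.exp (Complex.I * (ζ:ℂ)) *
      (Complex.exp (Complex.I * (((-x) * ζ^2 : ℝ):ℂ))
        - Complex.exp (-(Complex.I * (((-x) * ζ^2 : ℝ):ℂ)))) := by
  have h : ∀ ζ : ℝ, Complex.exp (Complex.I * (ζ:ℂ)) *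
      (Complex.exp (Complex.I * ((x * ζ^2 : ℝ):ℂ))
        - Complex.exp (-(Complex.I * ((x * ζ^2 : ℝ):ℂ))))
      = -(Complex.exp (Complex.I * (ζ:ℂ)) *
      (Complex.exp (Complex.I * (((-x) * ζ^2 : ℝ):ℂ))
        - Complex.exp (-(Complex.I * (((-x) * ζ^2 : ℝ):ℂ))))) := by
    intro ζ
    have hxc : (((-x) * ζ^2 : ℝ):ℂ) = -((x*ζ^2 : ℝ):ℂ) := by push_cast; ring
    rw [hxc, mul_neg, neg_neg]
    ring
  simp only [h]
  exact integral_neg _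

/-- the Fresnel-type kernel
`k(x) = lim_{R→∞} 2∫_0^R e^{iζ}(e^{ixζ²} − e^{−ixζ²}) dζ` exists for `x ≠ 0`
and satisfies `|k(x)| ≤ C|x|^{-1/2}`. -/
theorem fresnel_kernel_bound :
    ∃ C : ℝ, 0 < C ∧
      ∀ x : ℝ, x ≠ 0 →
        ∃ k : ℂ,
          Tendsto (fun R : ℝ => (2 : ℂ) * ∫ ζ in Set.Ioc (0:ℝ) R,
              Complex.exp (Complex.I * (ζ : ℂ)) *
                (Complex.exp (Complex.I * ((x * ζ^2 : ℝ) : ℂ))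
                  - Complex.exp (-(Complex.I * ((x * ζ^2 : ℝ) : ℂ)))))
            atTop (nhds k)
          ∧ ‖k‖ ≤ C * |x| ^ (-(1/2) : ℝ) := by
  refine ⟨24, by norm_num, ?_⟩
  intro x hx
  rcases hx.lt_or_gt with hneg | hposx
  · obtain ⟨k, hk, hkb⟩ := pos_case (-x) (by linarith)
    refine ⟨-k, ?_, ?_⟩
    · have h6 := hk.neg
      apply h6.congr
      intro R
      rw [neg_flip x R]
      ring
    · rw [norm_neg]
      rw [show |x| = |(-x)| by rw [abs_neg]]
      exact hkb
  · exact pos_case x hposx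
end
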